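/- Define $N_3(k) = \sum (\lambda_2 - \lambda_1 + 1)(\lambda_1 - \lambda_0 + 1)$ over triples of integers $0 \le \lambda_0 \le \lambda_1 \le \lambda_2 \le 2k-1$ with $\lambda_0+\lambda_1+\lambda_2 = 3k-2$, plus correction terms $N_{(2,1)}(k) + N_{(2,1)}(k+1)$ as in the paper. Then the count of degree-3 stable equivariant sheaves satisfies $N_3(k) = k(k+1)^2(k+2)/6$. -/

import Mathlib

/-- `N_{(1,1,1)}(k)`: the sum of `(λ₂-λ₁+1)(λ₁-λ₀+1)` over integer triples
`0 ≤ λ₀ ≤ λ₁ ≤ λ₂ ≤ 2k-1` with `λ₀+λ₁+λ₂ = 3k-2`. -/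
noncomputable def N111 (k : ℤ) : ℤ :=
  ∑ t ∈ (((Finset.Icc (0:ℤ) (2*k-1)) ×ˢ (Finset.Icc (0:ℤ) (2*k-1)) ×ˢ
      (Finset.Icc (0:ℤ) (2*k-1))).filter
      (fun t => t.1 ≤ t.2.1 ∧ t.2.1 ≤ t.2.2 ∧ t.1 + t.2.1 + t.2.2 = 3*k-2)),
    (t.2.2 - t.2.1 + 1) * (t.2.1 - t.1 + 1)


open Finset

lemma N111_eq (k : ℤ) (hk : 1 ≤ k) :
    N111 k =
      (∑ l1 ∈ Icc (k/2) (k-1), ∑ l0 ∈ Icc (k-1-l1) l1, (3*k-1-l0-2*l1)*(l1-l0+1))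
      + ∑ l1 ∈ Icc k ((3*k-2)/2), ∑ l0 ∈ Icc 0 (3*k-2-2*l1), (3*k-1-l0-2*l1)*(l1-l0+1) := by
  have step1 : N111 k =
      ∑ p ∈ (Icc (k/2) ((3*k-2)/2)).sigma
          (fun l1 => Icc (max 0 (k-1-l1)) (min l1 (3*k-2-2*l1))),
        (3*k-1-p.2-2*p.1)*(p.1-p.2+1) := by
    rw [N111]
    refine Finset.sum_nbij' (i := fun t => ⟨t.2.1, t.1⟩)
      (j := fun p => (p.2, p.1, 3*k-2-p.2-p.1)) ?_ ?_ ?_ ?_ ?_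
    · intro t ht
      simp only [mem_filter, mem_product, mem_Icc] at ht
      simp only [mem_sigma, mem_Icc, max_le_iff, le_min_iff]
      omega
    · intro p hp
      simp only [mem_sigma, mem_Icc, max_le_iff, le_min_iff] at hp
      simp only [mem_filter, mem_product, mem_Icc]
      omega
    · intro t ht
      obtain ⟨a, b, c⟩ := t
      simp only [mem_filter, mem_product, mem_Icc] at ht
      simp only [Prod.mk.injEq, true_and]
      omega
    · intro p hp
      rfl
    · intro t ht
      obtain ⟨a, b, c⟩ := t
      simp only [mem_filter, mem_product, mem_Icc] at ht
      have h1 : c - b + 1 = 3*k-1-a-2*b := by omega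
      rw [h1]
  rw [step1, Finset.sum_sigma]
  rw [show Icc (k/2) ((3*k-2)/2) = Icc (k/2) (k-1) ∪ Icc k ((3*k-2)/2) by
      ext x; simp only [mem_Icc, mem_union]; omega,
    sum_union (by simp only [disjoint_left, mem_Icc]; intro x h1 h2; omega)]
  congr 1
  · refine sum_congr rfl fun l1 hl1 => ?_
    simp only [mem_Icc] at hl1
    rw [max_eq_right (by omega), min_eq_left (by omega)]
  · refine sum_congr rfl fun l1 hl1 => ?_
    simp only [mem_Icc] at hl1
    rw [max_eq_left (by omega), min_eq_right (by omega)]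

lemma tele (f F : ℤ → ℚ) (h : ∀ x : ℤ, F x - F (x-1) = f x) (a b : ℤ) (hab : a - 1 ≤ b) :
    ∑ x ∈ Icc a b, f x = F b - F (a-1) := by
  refine Int.le_induction (motive := fun b _ => ∑ x ∈ Icc a b, f x = F b - F (a-1)) ?_ ?_ b hab
  · rw [show Icc a (a-1) = ∅ by apply Icc_eq_empty; omega]
    simp
  · intro n hn ih
    rw [show Icc a (n+1) = insert (n+1) (Icc a n) by ext x; simp only [mem_Icc, mem_insert]; omega,
      sum_insert (by simp only [mem_Icc]; omega)]
    rw [ih, ← h (n+1)]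
    ring

def F1 (k l x : ℚ) : ℚ :=
  3*k*l*x - (3/2)*k*x^2 + (3/2)*k*x - 2*l^2*x + (1/2)*l*x^2 - (5/2)*l*x
    + (1/3)*x^3 + (1/2)*x^2 - (5/6)*x

def H1 (k l : ℚ) : ℚ :=
  (7/6)*k^3*l - (11/4)*k^2*l^2 - (35/4)*k^2*l + (8/3)*k*l^3 + (49/4)*k*l^2 + (209/12)*k*l
    - (5/6)*l^4 - (14/3)*l^3 - (26/3)*l^2 - (35/6)*l

def H2 (k l : ℚ) : ℚ :=
  -(9/2)*k^3*l + (27/4)*k^2*l^2 + (63/4)*k^2*l - 4*k*l^3 - (51/4)*k*l^2 - (45/4)*k*l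
    + (5/6)*l^4 + (10/3)*l^3 + (25/6)*l^2 + (5/3)*l

lemma N111_val (k : ℤ) (hk : 1 ≤ k) :
    (N111 k : ℚ) = (H1 k ((k:ℚ)-1) - H1 k (((k/2 : ℤ) : ℚ) - 1))
      + (H2 k (((3*k-2)/2 : ℤ) : ℚ) - H2 k ((k:ℚ)-1)) := by
  rw [N111_eq k hk]
  push_cast
  have inner1 : ∀ l1 ∈ Icc (k/2) (k-1),
      (∑ l0 ∈ Icc (k-1-l1) l1, ((3*(k:ℚ)-1-(l0:ℤ)-2*(l1:ℤ))*((l1:ℤ)-(l0:ℤ)+1))) =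
        F1 k l1 l1 - F1 k l1 ((k:ℚ)-2-l1) := by
    intro l1 hl1
    simp only [mem_Icc] at hl1
    rw [tele _ (fun x : ℤ => F1 k l1 x) (by intro x; simp only [F1]; push_cast; ring)
      (k-1-l1) l1 (by omega)]
    have : ((k-1-l1-1 : ℤ) : ℚ) = (k:ℚ)-2-l1 := by push_cast; ring
    rw [this]
  have inner2 : ∀ l1 ∈ Icc k ((3*k-2)/2),
      (∑ l0 ∈ Icc 0 (3*k-2-2*l1), ((3*(k:ℚ)-1-(l0:ℤ)-2*(l1:ℤ))*((l1:ℤ)-(l0:ℤ)+1))) =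
        F1 k l1 (3*(k:ℚ)-2-2*l1) - F1 k l1 (-1) := by
    intro l1 hl1
    simp only [mem_Icc] at hl1
    rw [tele _ (fun x : ℤ => F1 k l1 x) (by intro x; simp only [F1]; push_cast; ring)
      0 (3*k-2-2*l1) (by omega)]
    have e1 : ((3*k-2-2*l1 : ℤ) : ℚ) = 3*(k:ℚ)-2-2*l1 := by push_cast; ring
    have e2 : ((0-1 : ℤ) : ℚ) = -1 := by norm_num
    rw [e1, e2]
  rw [sum_congr rfl inner1, sum_congr rfl inner2]
  rw [tele _ (fun l : ℤ => H1 k l) (by intro x; simp only [H1, F1]; push_cast; ring)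
    (k/2) (k-1) (by omega)]
  rw [tele _ (fun l : ℤ => H2 k l) (by intro x; simp only [H2, F1]; push_cast; ring)
    k ((3*k-2)/2) (by omega)]
  simp only [H1, H2]
  push_cast
  ring

lemma N111_even (m : ℤ) (hm : 1 ≤ m) :
    (N111 (2*m) : ℚ) = (7/3)*m^4 + (14/3)*m^3 + (19/6)*m^2 + (5/6)*m := by
  rw [N111_val (2*m) (by omega),
    show (2*m)/2 = m by omega, show (3*(2*m)-2)/2 = 3*m-1 by omega]
  simp only [H1, H2]
  push_cast
  ring

lemma N111_odd (m : ℤ) (hm : 0 ≤ m) :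
    (N111 (2*m+1) : ℚ) = (7/3)*m^4 + (28/3)*m^3 + (41/3)*m^2 + (26/3)*m + 2 := by
  rw [N111_val (2*m+1) (by omega),
    show (2*m+1)/2 = m by omega, show (3*(2*m+1)-2)/2 = 3*m by omega]
  simp only [H1, H2]
  push_cast
  ring

/-- `N_{(2,1)}(k)` (valid for `k ≥ 1`):
`∑_{b=⌈-(k+1)/2⌉}^{-1} ⌊-(b+1)/2⌋ (k+2b+2)(k+2b+3)
  + ½ ∑_{a=0}^{⌊(k-3)/4⌋} (k-4a-2)(k-4a-1)`. -/
noncomputable def N21 (k : ℤ) : ℚ :=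
  (∑ b ∈ Finset.Icc (-((k+1)/2)) (-1 : ℤ),
      ((((-(b+1))/2) * (k+2*b+2) * (k+2*b+3) : ℤ) : ℚ)) +
  (1/2) * ∑ a ∈ Finset.Icc (0 : ℤ) ((k-3)/4), (((k-4*a-2) * (k-4*a-1) : ℤ) : ℚ)

lemma sum_neg1 (f : ℤ → ℚ) (a : ℤ) : ∑ x ∈ Icc a (-1), f x = ∑ x ∈ Icc 1 (-a), f (-x) := by
  refine Finset.sum_nbij' (i := fun x => -x) (j := fun x => -x) ?_ ?_ ?_ ?_ ?_ <;>
    intro x hx <;> simp only [mem_Icc] at * <;> first | omega | (rw [neg_neg])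

lemma sum_split2 (f : ℤ → ℚ) (n : ℤ) (hn : 0 ≤ n) :
    ∑ x ∈ Icc 1 n, f x =
      (∑ t ∈ Icc 1 (n/2), f (2*t)) + ∑ t ∈ Icc 0 ((n-1)/2), f (2*t+1) := by
  refine Int.le_induction (motive := fun n _ => ∑ x ∈ Icc 1 n, f x =
    (∑ t ∈ Icc 1 (n/2), f (2*t)) + ∑ t ∈ Icc 0 ((n-1)/2), f (2*t+1)) ?_ ?_ n hn
  · rw [show ((0:ℤ))/2 = 0 by decide, show ((0:ℤ)-1)/2 = -1 by decide]
    simp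
  · intro n hn ih
    rw [show Icc (1:ℤ) (n+1) = insert (n+1) (Icc 1 n) by
        ext x; simp only [mem_Icc, mem_insert]; omega,
      sum_insert (by simp only [mem_Icc]; omega), ih]
    rcases Int.even_or_odd n with ⟨m, hm⟩ | ⟨m, hm⟩
    · have h1 : (n+1)/2 = m := by omega
      have h2 : (n+1-1)/2 = m := by omega
      have h3 : (n-1)/2 = m-1 := by omega
      have h4 : n/2 = m := by omega
      rw [h1, h2, h3, h4,
        show Icc (0:ℤ) m = insert m (Icc 0 (m-1)) by
          ext x; simp only [mem_Icc, mem_insert]; omega,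
        sum_insert (by simp only [mem_Icc]; omega),
        show 2*m+1 = n+1 by omega]
      ring
    · have h1 : (n+1)/2 = m+1 := by omega
      have h2 : (n+1-1)/2 = m := by omega
      have h3 : (n-1)/2 = m := by omega
      have h4 : n/2 = m := by omega
      rw [h1, h2, h3, h4,
        show Icc (1:ℤ) (m+1) = insert (m+1) (Icc 1 m) by
          ext x; simp only [mem_Icc, mem_insert]; omega,
        sum_insert (by simp only [mem_Icc]; omega),
        show 2*(m+1) = n+1 by omega]
      ring

lemma S1_eval (k : ℤ) (hk : 0 ≤ k) :
    (∑ b ∈ Finset.Icc (-((k+1)/2)) (-1 : ℤ),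
      ((((-(b+1))/2) * (k+2*b+2) * (k+2*b+3) : ℤ) : ℚ))
      = (∑ t ∈ Icc 1 ((k+1)/2/2), (((t-1) * (k-4*t+2) * (k-4*t+3) : ℤ) : ℚ))
      + ∑ t ∈ Icc 0 (((k+1)/2-1)/2), ((t * (k-4*t) * (k-4*t+1) : ℤ) : ℚ) := by
  rw [sum_neg1, neg_neg, sum_split2 _ _ (by omega)]
  congr 1
  · refine sum_congr rfl fun t ht => ?_
    have h1 : (-(-(2*t)+1))/2 = t - 1 := by omega
    simp only [h1]
    push_cast
    ring
  · refine sum_congr rfl fun t ht => ?_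
    have h1 : (-(-(2*t+1)+1))/2 = t := by omega
    simp only [h1]
    push_cast
    ring

def FA (k x : ℚ) : ℚ :=
  (1/2)*k^2*x^2 - (1/2)*k^2*x - (8/3)*k*x^3 + (5/2)*k*x^2 + (1/6)*k*x
    + 4*x^4 - 4*x^3 - x^2 + x

def FB (k x : ℚ) : ℚ :=
  (1/2)*k^2*x^2 + (1/2)*k^2*x - (8/3)*k*x^3 - (7/2)*k*x^2 - (5/6)*k*x
    + 4*x^4 + (20/3)*x^3 + 2*x^2 - (2/3)*x

def FC (k x : ℚ) : ℚ :=
  k^2*x - 4*k*x^2 - 7*k*x + (16/3)*x^3 + 14*x^2 + (32/3)*x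

lemma N21_val (k : ℤ) (hk : 0 ≤ k) :
    N21 k = (FA k (((k+1)/2/2 : ℤ) : ℚ) - FA k 0)
      + (FB k ((((k+1)/2-1)/2 : ℤ) : ℚ) - FB k (-1))
      + (1/2) * (FC k (((k-3)/4 : ℤ) : ℚ) - FC k (-1)) := by
  rw [N21, S1_eval k hk]
  rw [tele _ (fun t : ℤ => FA k t) (by intro x; simp only [FA]; push_cast; ring)
    1 ((k+1)/2/2) (by omega)]
  rw [tele _ (fun t : ℤ => FB k t) (by intro x; simp only [FB]; push_cast; ring)
    0 (((k+1)/2-1)/2) (by omega)]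
  rw [tele _ (fun t : ℤ => FC k t) (by intro x; simp only [FC]; push_cast; ring)
    0 ((k-3)/4) (by omega)]
  simp only [FA, FB, FC]
  push_cast
  ring

lemma N21_r0 (q : ℤ) (hq : 0 ≤ q) :
    N21 (4*q) = (8/3)*q^4 + (4/3)*q^3 - (2/3)*q^2 - (1/3)*q := by
  rw [N21_val (4*q) (by omega),
    show (4*q+1)/2/2 = q by omega,
    show ((4*q+1)/2-1)/2 = q-1 by omega,
    show (4*q-3)/4 = q-1 by omega]
  simp only [FA, FB, FC]
  push_cast
  ring

lemma N21_r1 (q : ℤ) (hq : 0 ≤ q) :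
    N21 (4*q+1) = (8/3)*q^4 + 4*q^3 + (4/3)*q^2 := by
  rw [N21_val (4*q+1) (by omega),
    show (4*q+1+1)/2/2 = q by omega,
    show ((4*q+1+1)/2-1)/2 = q by omega,
    show (4*q+1-3)/4 = q-1 by omega]
  simp only [FA, FB, FC]
  push_cast
  ring

lemma N21_r2 (q : ℤ) (hq : 0 ≤ q) :
    N21 (4*q+2) = (8/3)*q^4 + (20/3)*q^3 + (16/3)*q^2 + (4/3)*q := by
  rw [N21_val (4*q+2) (by omega),
    show (4*q+2+1)/2/2 = q by omega,
    show ((4*q+2+1)/2-1)/2 = q by omega,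
    show (4*q+2-3)/4 = q-1 by omega]
  simp only [FA, FB, FC]
  push_cast
  ring

lemma N21_r3 (q : ℤ) (hq : 0 ≤ q) :
    N21 (4*q+3) = (8/3)*q^4 + (28/3)*q^3 + (34/3)*q^2 + (17/3)*q + 1 := by
  rw [N21_val (4*q+3) (by omega),
    show (4*q+3+1)/2/2 = q+1 by omega,
    show ((4*q+3+1)/2-1)/2 = q by omega,
    show (4*q+3-3)/4 = q by omega]
  simp only [FA, FB, FC]
  push_cast
  ring

/-- the count of degree-3 stable equivariant sheaves
`N₃(k) = N_{(1,1,1)}(k) + N_{(2,1)}(k) + N_{(1,2)}(k)` with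
`N_{(1,2)}(k) = N_{(2,1)}(k+1)` equals `k(k+1)²(k+2)/6`. -/
theorem stmt2 (k : ℤ) (hk : 1 ≤ k) :
    (N111 k : ℚ) + N21 k + N21 (k+1) = ((k * (k+1)^2 * (k+2) : ℤ) : ℚ) / 6 := by
  have h4 : k % 4 = 0 ∨ k % 4 = 1 ∨ k % 4 = 2 ∨ k % 4 = 3 := by omega
  rcases h4 with h | h | h | h
  · obtain ⟨q, hq⟩ : ∃ q, k = 4*q := ⟨k/4, by omega⟩
    subst hq
    have h1 := N111_even (2*q) (by omega)
    rw [show 2*(2*q) = 4*q by ring] at h1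
    rw [h1, N21_r0 q (by omega), show (4*q+1 : ℤ) = 4*q+1 by ring, N21_r1 q (by omega)]
    push_cast
    ring
  · obtain ⟨q, hq⟩ : ∃ q, k = 4*q+1 := ⟨k/4, by omega⟩
    subst hq
    have h1 := N111_odd (2*q) (by omega)
    rw [show 2*(2*q)+1 = 4*q+1 by ring] at h1
    rw [h1, N21_r1 q (by omega), show (4*q+1+1 : ℤ) = 4*q+2 by ring, N21_r2 q (by omega)]
    push_cast
    ring
  · obtain ⟨q, hq⟩ : ∃ q, k = 4*q+2 := ⟨k/4, by omega⟩
    subst hq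
    have h1 := N111_even (2*q+1) (by omega)
    rw [show 2*(2*q+1) = 4*q+2 by ring] at h1
    rw [h1, N21_r2 q (by omega), show (4*q+2+1 : ℤ) = 4*q+3 by ring, N21_r3 q (by omega)]
    push_cast
    ring
  · obtain ⟨q, hq⟩ : ∃ q, k = 4*q+3 := ⟨k/4, by omega⟩
    subst hq
    have h1 := N111_odd (2*q+1) (by omega)
    rw [show 2*(2*q+1)+1 = 4*q+3 by ring] at h1
    have h2 := N21_r0 (q+1) (by omega)
    rw [show 4*(q+1) = 4*q+3+1 by ring] at h2
    rw [h1, N21_r3 q (by omega), h2]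
    push_cast
    ring
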